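/- Let Ω ⊆ ℝ^m be open, let φ : Ω → ℝ be of class C², let u : Ω → ℝ be differentiable with locally Lipschitz gradient map ∇u : Ω → ℝ^m, assume u ≤ φ on Ω, and set D = { x ∈ Ω : u(x) = φ(x) }. Then: (i) ∇u(x) = ∇φ(x) for every x ∈ D; and (ii) for Lebesgue-almost every x ∈ D, the map ∇u is differentiable at x and its derivative at x equals the Hessian D²φ(x) of φ at x. In particular the (almost-everywhere defined) second derivatives of u and φ coincide almost everywhere on the contact set D. (This is the local form of part (c) of the regularity theorem: (dd^cφ_e)^n = (dd^cφ)^n almost everywhere on the contact set.) -/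

import Mathlib

open scoped RealInnerProductSpace ENNReal Topology
open MeasureTheory

open Metric Filter Set in
/-- At a Lebesgue density point `x` of a set `s` in Euclidean space, every point `y` near `x`
admits a point of `s` within distance `ε * dist y x`. -/
lemma density_exists_near {m : ℕ} {s : Set (EuclideanSpace ℝ (Fin m))}
    {x : EuclideanSpace ℝ (Fin m)} (hxs : x ∈ s)
    (hd : Filter.Tendsto (fun r => volume (s ∩ closedBall x r) / volume (closedBall x r))
      (nhdsWithin 0 (Set.Ioi 0)) (nhds 1)) {ε : ℝ} (hε : 0 < ε) :
    ∀ᶠ y in nhds x, ∃ z ∈ s, dist z y ≤ ε * dist y x := by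
  have h1ε : (0:ℝ) < 1 + ε := by linarith
  set n := Module.finrank ℝ (EuclideanSpace ℝ (Fin m)) with hn
  set c : ℝ≥0∞ := ENNReal.ofReal ((ε / (1 + ε)) ^ n) with hc
  have hc0 : c ≠ 0 := by
    simp only [hc, ne_eq, ENNReal.ofReal_eq_zero, not_le]
    positivity
  have hsub1 : (1:ℝ≥0∞) - c < 1 := ENNReal.sub_lt_self ENNReal.one_ne_top one_ne_zero hc0
  have h : ∀ᶠ r in nhdsWithin (0:ℝ) (Set.Ioi 0),
      1 - c < volume (s ∩ closedBall x r) / volume (closedBall x r) :=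
    hd.eventually (eventually_gt_nhds hsub1)
  rw [eventually_nhdsWithin_iff, Metric.eventually_nhds_iff] at h
  obtain ⟨δ, δpos, hδ⟩ := h
  rw [Metric.eventually_nhds_iff]
  refine ⟨δ / (1 + ε), by positivity, fun {y} hy => ?_⟩
  rcases eq_or_ne y x with rfl | hyx
  · exact ⟨y, hxs, by simp⟩
  by_contra h'
  push_neg at h'
  have hd0 : 0 < dist y x := dist_pos.2 hyx
  set d := dist y x with hdd
  set r := (1 + ε) * d with hr
  have hr0 : 0 < r := by positivity
  have hrδ : r < δ := by
    have h2 : d < δ / (1 + ε) := hy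
    calc r = (1 + ε) * d := rfl
    _ < (1 + ε) * (δ / (1 + ε)) := by gcongr
    _ = δ := by field_simp
  have hmiss : s ∩ closedBall y (ε * d) = ∅ := by
    ext z
    simp only [mem_inter_iff, mem_closedBall, mem_empty_iff_false, iff_false, not_and, not_le]
    exact fun hz => h' z hz
  have hA : volume (closedBall x r)
      = ENNReal.ofReal (r ^ n) * volume (closedBall (0 : EuclideanSpace ℝ (Fin m)) 1) :=
    Measure.addHaar_closedBall' volume x hr0.le
  have hB : volume (closedBall y (ε * d))
      = ENNReal.ofReal ((ε * d) ^ n) * volume (closedBall (0 : EuclideanSpace ℝ (Fin m)) 1) :=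
    Measure.addHaar_closedBall' volume y (by positivity)
  have hBA : volume (closedBall y (ε * d)) = c * volume (closedBall x r) := by
    rw [hA, hB, hc, ← mul_assoc, ← ENNReal.ofReal_mul (by positivity)]
    congr 2
    rw [← mul_pow, hr]
    congr 1
    field_simp
  have hballsub : closedBall y (ε * d) ⊆ closedBall x r := by
    apply closedBall_subset_closedBall'
    rw [hr, ← hdd]; nlinarith
  have hAne : volume (closedBall x r) ≠ 0 := (measure_closedBall_pos volume x hr0).ne'
  have hAtop : volume (closedBall x r) ≠ ⊤ := measure_closedBall_lt_top.ne
  have hkey : volume (s ∩ closedBall x r) ≤ (1 - c) * volume (closedBall x r) := by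
    have hs1 : s ∩ closedBall x r ⊆ closedBall x r \ closedBall y (ε * d) := by
      rintro z ⟨hzs, hz⟩
      refine ⟨hz, fun hzb => ?_⟩
      have hzz : z ∈ s ∩ closedBall y (ε * d) := ⟨hzs, hzb⟩
      rw [hmiss] at hzz; exact hzz
    calc volume (s ∩ closedBall x r) ≤ volume (closedBall x r \ closedBall y (ε * d)) :=
          measure_mono hs1
    _ = volume (closedBall x r) - volume (closedBall y (ε * d)) :=
        measure_diff hballsub measurableSet_closedBall.nullMeasurableSet
          measure_closedBall_lt_top.ne
    _ = volume (closedBall x r) - c * volume (closedBall x r) := by rw [hBA]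
    _ = (1 - c) * volume (closedBall x r) := by
        rw [ENNReal.sub_mul (fun _ _ => hAtop), one_mul]
  have hratio : volume (s ∩ closedBall x r) / volume (closedBall x r) ≤ 1 - c := by
    rw [ENNReal.div_le_iff_le_mul (Or.inl hAne) (Or.inl hAtop)]
    exact hkey
  have hlt := hδ (show dist r 0 < δ by rw [Real.dist_eq, sub_zero, abs_of_pos hr0]; exact hrδ)
    (Set.mem_Ioi.2 hr0)
  exact absurd (lt_of_lt_of_le hlt hratio) (lt_irrefl _)

open Metric Filter Set in
/-- A map that is Lipschitz near `x` and vanishes on a set `s` having `x` as a Lebesgue density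
point is differentiable at `x` with derivative `0`. -/
lemma hasFDerivAt_zero_of_vanish {m : ℕ} {s t : Set (EuclideanSpace ℝ (Fin m))}
    {g : EuclideanSpace ℝ (Fin m) → EuclideanSpace ℝ (Fin m)}
    {x : EuclideanSpace ℝ (Fin m)} {K : NNReal}
    (hxs : x ∈ s) (hg0 : ∀ y ∈ s, g y = 0) (ht : t ∈ nhds x) (hK : LipschitzOnWith K g t)
    (hd : Filter.Tendsto (fun r => volume (s ∩ closedBall x r) / volume (closedBall x r))
      (nhdsWithin 0 (Set.Ioi 0)) (nhds 1)) :
    HasFDerivAt g (0 : EuclideanSpace ℝ (Fin m) →L[ℝ] EuclideanSpace ℝ (Fin m)) x := by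
  rw [hasFDerivAt_iff_isLittleO, Asymptotics.isLittleO_iff]
  intro c hc
  set ε := c / ((K : ℝ) + 1) with hεdef
  have hK1 : (0:ℝ) < (K:ℝ) + 1 := by positivity
  have hε : (0:ℝ) < ε := by positivity
  obtain ⟨r, hr0, hrt⟩ := Metric.mem_nhds_iff.1 ht
  have hρ0 : (0:ℝ) < r / (1 + ε) := by positivity
  filter_upwards [density_exists_near hxs hd hε, Metric.ball_mem_nhds x hρ0] with y hy hyb
  obtain ⟨z, hzs, hz⟩ := hy
  have hdyx : dist y x < r / (1 + ε) := mem_ball.1 hyb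
  have hyt : y ∈ t := hrt (mem_ball.1 (by
    have : dist y x < r := lt_of_lt_of_le hdyx (by
      rw [div_le_iff₀ (by positivity)]
      nlinarith [dist_nonneg (x := y) (y := x)])
    exact mem_ball.2 this))
  have hzt : z ∈ t := by
    apply hrt
    rw [mem_ball]
    calc dist z x ≤ dist z y + dist y x := dist_triangle z y x
    _ ≤ ε * dist y x + dist y x := by linarith
    _ = (1 + ε) * dist y x := by ring
    _ < (1 + ε) * (r / (1 + ε)) := by gcongr
    _ = r := by field_simp
  have h1 : ‖g y‖ ≤ (K:ℝ) * (ε * dist y x) := by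
    have := hK.dist_le_mul y hyt z hzt
    rw [hg0 z hzs, dist_zero_right] at this
    calc ‖g y‖ ≤ (K:ℝ) * dist y z := this
    _ = (K:ℝ) * dist z y := by rw [dist_comm]
    _ ≤ (K:ℝ) * (ε * dist y x) := by
        have : (0:ℝ) ≤ (K:ℝ) := K.coe_nonneg
        nlinarith
  have h2 : (K:ℝ) * ε ≤ c := by
    rw [hεdef, mul_comm, div_mul_eq_mul_div, div_le_iff₀ hK1]
    nlinarith [K.coe_nonneg, hc.le]
  simp only [hg0 x hxs, ContinuousLinearMap.zero_apply, sub_zero]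
  calc ‖g y‖ ≤ (K:ℝ) * ε * dist y x := by linarith [h1]
  _ ≤ c * dist y x := by nlinarith [dist_nonneg (x := y) (y := x)]
  _ = c * ‖y - x‖ := by rw [dist_eq_norm]

/-- local form of part (c) of the regularity theorem. If `φ` is `C²` on an open
set `Ω ⊆ ℝᵐ`, `u` is differentiable on `Ω` with locally Lipschitz gradient, `u ≤ φ` on `Ω`,
and `D = {x ∈ Ω : u x = φ x}` is the contact set, then `∇u = ∇φ` on `D`, and for
Lebesgue-almost every point of `D` the gradient map `∇u` is differentiable with derivative
equal to the Hessian of `φ`. -/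
theorem gradient_eq_and_hessian_ae_on_contact_set (m : ℕ)
    (Ω : Set (EuclideanSpace ℝ (Fin m))) (hΩ : IsOpen Ω)
    (φ u : EuclideanSpace ℝ (Fin m) → ℝ)
    (hφ : ContDiffOn ℝ 2 φ Ω)
    (hu : ∀ x ∈ Ω, DifferentiableAt ℝ u x)
    (hu' : ∀ x ∈ Ω, ∃ s ∈ nhds x, ∃ K : NNReal, LipschitzOnWith K (gradient u) s)
    (hle : ∀ x ∈ Ω, u x ≤ φ x) :
    (∀ x ∈ Ω, u x = φ x → gradient u x = gradient φ x) ∧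
    (∀ᵐ x ∂volume, x ∈ Ω → u x = φ x →
      DifferentiableAt ℝ (gradient u) x ∧
      fderiv ℝ (gradient u) x = fderiv ℝ (gradient φ) x) := by
  -- Part (i): the gradients agree on the contact set.
  have key : ∀ x ∈ Ω, u x = φ x → fderiv ℝ u x = fderiv ℝ φ x := by
    intro x hx hux
    have hφd : DifferentiableAt ℝ φ x :=
      (hφ.differentiableOn two_ne_zero).differentiableAt (hΩ.mem_nhds hx)
    have hud := hu x hx
    have hmin : IsLocalMin (fun y => φ y - u y) x := by
      have hev : ∀ᶠ y in nhds x, (fun y => φ y - u y) x ≤ (fun y => φ y - u y) y := by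
        filter_upwards [hΩ.mem_nhds hx] with y hy
        have h3 := hle y hy
        show φ x - u x ≤ φ y - u y
        rw [hux]
        linarith
      exact hev
    have h0 : fderiv ℝ (fun y => φ y - u y) x = 0 := hmin.fderiv_eq_zero
    rw [fderiv_fun_sub hφd hud] at h0
    exact (sub_eq_zero.1 h0).symm
  have grad_eq : ∀ x ∈ Ω, u x = φ x → gradient u x = gradient φ x := by
    intro x hx hux
    unfold gradient
    rw [key x hx hux]
  refine ⟨grad_eq, ?_⟩
  -- Part (ii): almost everywhere on the contact set.
  set D : Set (EuclideanSpace ℝ (Fin m)) := {x | x ∈ Ω ∧ u x = φ x} with hDdef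
  have hDmeas : MeasurableSet D := by
    have hcontu : ContinuousOn u Ω := fun y hy => (hu y hy).continuousAt.continuousWithinAt
    have hcont : ContinuousOn (fun y => u y - φ y) Ω := hcontu.sub hφ.continuousOn
    have hopen : IsOpen (Ω ∩ (fun y => u y - φ y) ⁻¹' {(0:ℝ)}ᶜ) :=
      hcont.isOpen_inter_preimage hΩ isOpen_compl_singleton
    have hDeq : D = Ω \ (Ω ∩ (fun y => u y - φ y) ⁻¹' {(0:ℝ)}ᶜ) := by
      ext z
      simp only [hDdef, Set.mem_setOf_eq, Set.mem_diff, Set.mem_inter_iff, Set.mem_preimage,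
        Set.mem_compl_iff, Set.mem_singleton_iff, not_and]
      constructor
      · rintro ⟨hz, hz2⟩
        exact ⟨hz, fun _ h => h (by linarith)⟩
      · rintro ⟨hz, hz2⟩
        refine ⟨hz, by linarith [not_not.1 (fun h => (hz2 hz) h)]⟩
    rw [hDeq]
    exact hΩ.measurableSet.diff hopen.measurableSet
  have hbes := Besicovitch.ae_tendsto_measure_inter_div_of_measurableSet volume hDmeas
  filter_upwards [hbes] with x hx hxΩ hxu
  have hxD : x ∈ D := ⟨hxΩ, hxu⟩
  rw [Set.indicator_of_mem hxD, Pi.one_apply] at hx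
  -- regularity of the gradient of φ at x
  have hφx : ContDiffAt ℝ 2 φ x := hφ.contDiffAt (hΩ.mem_nhds hxΩ)
  have h1 : ContDiffAt ℝ 1 (fderiv ℝ φ) x := hφx.fderiv_right (by norm_num)
  have hgradφ : ContDiffAt ℝ 1 (gradient φ) x := by
    have hcomp := ((InnerProductSpace.toDual ℝ
      (EuclideanSpace ℝ (Fin m))).symm.contDiff.contDiffAt).comp x h1
    exact hcomp
  have hdiffφ : DifferentiableAt ℝ (gradient φ) x := hgradφ.differentiableAt one_ne_zero
  obtain ⟨K₂, t₂, ht₂, hlip₂⟩ := hgradφ.exists_lipschitzOnWith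
  obtain ⟨t₁, ht₁, K₁, hlip₁⟩ := hu' x hxΩ
  set g : EuclideanSpace ℝ (Fin m) → EuclideanSpace ℝ (Fin m) :=
    fun y => gradient u y - gradient φ y with hgdef
  have hlipg : LipschitzOnWith (K₁ + K₂) g (t₁ ∩ t₂) := by
    rw [lipschitzOnWith_iff_dist_le_mul]
    rintro a ⟨ha1, ha2⟩ b ⟨hb1, hb2⟩
    calc dist (g a) (g b)
        ≤ dist (gradient u a) (gradient u b) + dist (gradient φ a) (gradient φ b) :=
          dist_sub_sub_le _ _ _ _
    _ ≤ (K₁:ℝ) * dist a b + (K₂:ℝ) * dist a b :=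
        add_le_add (hlip₁.dist_le_mul a ha1 b hb1) (hlip₂.dist_le_mul a ha2 b hb2)
    _ = ((K₁ + K₂ : NNReal):ℝ) * dist a b := by push_cast; ring
  have hg0 : ∀ y ∈ D, g y = 0 := by
    rintro y ⟨hy1, hy2⟩
    simp only [hgdef, sub_eq_zero]
    exact grad_eq y hy1 hy2
  have hg : HasFDerivAt g
      (0 : EuclideanSpace ℝ (Fin m) →L[ℝ] EuclideanSpace ℝ (Fin m)) x :=
    hasFDerivAt_zero_of_vanish hxD hg0 (Filter.inter_mem ht₁ ht₂) hlipg hx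
  have hgu : HasFDerivAt (gradient u)
      ((0 : EuclideanSpace ℝ (Fin m) →L[ℝ] EuclideanSpace ℝ (Fin m))
        + fderiv ℝ (gradient φ) x) x := by
    have heq : gradient u = fun y => g y + gradient φ y := by
      funext y
      simp [hgdef]
    rw [heq]
    exact hg.add hdiffφ.hasFDerivAt
  refine ⟨hgu.differentiableAt, ?_⟩
  rw [hgu.fderiv, zero_add]
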